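/- arXiv:1409.7794 — 4 statements merged into one kernel-verified Lean document; each statement's English description precedes it below -/
import Mathlib

section
/- If μ* minimizes f over {μ : Fin d → ℝ : ‖μ‖₀ ≤ B}, then for every index j one has μ*_j = μ̂_j or μ*_j = 0. That is, every optimal solution of the SOFS truncation problem agrees with μ̂ on its support and is zero elsewhere. -/
/-- Every optimal solution `μ*` of the SOFS truncation problem
`min (1/2) ∑ j, D j * (μ j - μ̂ j)^2  s.t.  ‖μ‖₀ ≤ B`
agrees with `μ̂` on its support and is zero elsewhere. -/
theorem sofs_truncation_minimizer_agrees_or_zero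
    (d B : ℕ) (hB : B ≤ d) (D μhat : Fin d → ℝ) (hD : ∀ j, D j > 0)
    (μstar : Fin d → ℝ)
    (hcard : (Finset.univ.filter fun j => μstar j ≠ 0).card ≤ B)
    (hmin : ∀ μ : Fin d → ℝ, (Finset.univ.filter fun j => μ j ≠ 0).card ≤ B →
      (1 / 2) * ∑ j, D j * (μstar j - μhat j) ^ 2 ≤
        (1 / 2) * ∑ j, D j * (μ j - μhat j) ^ 2) :
    ∀ j, μstar j = μhat j ∨ μstar j = 0 := by
  intro j
  by_cases hz : μstar j = 0
  · exact Or.inr hz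
  left
  set μ := Function.update μstar j (μhat j) with hμ
  have hsub : (Finset.univ.filter fun i => μ i ≠ 0) ⊆
      (Finset.univ.filter fun i => μstar i ≠ 0) := by
    intro i hi
    simp only [Finset.mem_filter, Finset.mem_univ, true_and] at hi ⊢
    by_cases hij : i = j
    · subst hij; exact hz
    · simpa [hμ, Function.update_of_ne hij] using hi
  have hcard' : (Finset.univ.filter fun i => μ i ≠ 0).card ≤ B :=
    le_trans (Finset.card_le_card hsub) hcard
  have h1 := hmin μ hcard'
  have hterm : ∀ i, i ≠ j → D i * (μ i - μhat i) ^ 2 = D i * (μstar i - μhat i) ^ 2 := by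
    intro i hij
    simp [hμ, Function.update_of_ne hij]
  have hsum : ∑ i, D i * (μ i - μhat i) ^ 2
      = (∑ i, D i * (μstar i - μhat i) ^ 2) - D j * (μstar j - μhat j) ^ 2 := by
    rw [← Finset.sum_erase_add _ _ (Finset.mem_univ j),
        ← Finset.sum_erase_add _ (fun i => D i * (μstar i - μhat i) ^ 2) (Finset.mem_univ j)]
    have : ∑ i ∈ Finset.univ.erase j, D i * (μ i - μhat i) ^ 2
        = ∑ i ∈ Finset.univ.erase j, D i * (μstar i - μhat i) ^ 2 :=
      Finset.sum_congr rfl fun i hi => hterm i (Finset.ne_of_mem_erase hi)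
    rw [this]
    simp only [hμ, Function.update_self]
    ring
  rw [hsum] at h1
  have hle : D j * (μstar j - μhat j) ^ 2 ≤ 0 := by linarith
  have hge : 0 ≤ D j * (μstar j - μhat j) ^ 2 :=
    mul_nonneg (le_of_lt (hD j)) (sq_nonneg _)
  have h2 : (μstar j - μhat j) ^ 2 = 0 := by
    rcases mul_eq_zero.mp (le_antisymm hle hge) with h | h
    · exact absurd h (hD j).ne'
    · exact h
  have := pow_eq_zero_iff (n := 2) (by norm_num) |>.mp h2
  linarith
end

section
/- If μ* minimizes f over {μ : ‖μ‖₀ ≤ B}, then for every i ∈ supp(μ*) and every j ∉ supp(μ*) one has D_i μ̂_i² ≥ D_j μ̂_j². That is, the coordinates retained by an optimal solution carry the largest confidence-weighted squared means. -/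
/-- If `μ*` minimizes `f μ = (1/2) ∑ j, D j * (μ j - μ̂ j)^2` over
`{μ : ‖μ‖₀ ≤ B}`, then the retained coordinates carry the largest
confidence-weighted squared means: for `i` in the support of `μ*` and `j`
outside it, `D i * μ̂ i ^ 2 ≥ D j * μ̂ j ^ 2`. -/
theorem sofs_truncation_support_has_largest_weighted_means
    (d B : ℕ) (hB : B ≤ d) (D μhat : Fin d → ℝ) (hD : ∀ j, D j > 0)
    (μstar : Fin d → ℝ)
    (hcard : (Finset.univ.filter fun j => μstar j ≠ 0).card ≤ B)
    (hmin : ∀ μ : Fin d → ℝ, (Finset.univ.filter fun j => μ j ≠ 0).card ≤ B →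
      (1 / 2) * ∑ j, D j * (μstar j - μhat j) ^ 2 ≤
        (1 / 2) * ∑ j, D j * (μ j - μhat j) ^ 2) :
    ∀ i, μstar i ≠ 0 → ∀ j, μstar j = 0 →
      D i * (μhat i) ^ 2 ≥ D j * (μhat j) ^ 2 := by
  intro i hi j hj
  have hij : i ≠ j := fun h => hi (h ▸ hj)
  set μ' : Fin d → ℝ := Function.update (Function.update μstar i 0) j (μhat j) with hμ'
  have hμ'i : μ' i = 0 := by
    simp [hμ', Function.update_apply, hij]
  have hμ'j : μ' j = μhat j := by
    simp [hμ', Function.update_apply]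
  have hμ'k : ∀ k, k ≠ i → k ≠ j → μ' k = μstar k := by
    intro k hki hkj
    simp [hμ', Function.update_apply, hki, hkj]
  -- support cardinality of μ'
  have hsub : (Finset.univ.filter fun k => μ' k ≠ 0) ⊆
      insert j ((Finset.univ.filter fun k => μstar k ≠ 0).erase i) := by
    intro k hk
    simp only [Finset.mem_filter, Finset.mem_univ, true_and] at hk
    by_cases hkj : k = j
    · simp [hkj]
    · have hki : k ≠ i := by
        intro h; exact hk (h ▸ hμ'i)
      have := hμ'k k hki hkj
      simp [Finset.mem_insert, Finset.mem_erase, hki, hkj, this ▸ hk]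
  have himem : i ∈ (Finset.univ.filter fun k => μstar k ≠ 0) := by
    simp [hi]
  have hcard' : (Finset.univ.filter fun k => μ' k ≠ 0).card ≤ B := by
    calc (Finset.univ.filter fun k => μ' k ≠ 0).card
        ≤ (insert j ((Finset.univ.filter fun k => μstar k ≠ 0).erase i)).card :=
          Finset.card_le_card hsub
      _ ≤ ((Finset.univ.filter fun k => μstar k ≠ 0).erase i).card + 1 :=
          Finset.card_insert_le _ _
      _ = (Finset.univ.filter fun k => μstar k ≠ 0).card :=
          by rw [Finset.card_erase_of_mem himem]
             have := Finset.card_pos.mpr ⟨i, himem⟩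
             omega
      _ ≤ B := hcard
  have key := hmin μ' hcard'
  have key2 : ∑ k, D k * (μstar k - μhat k) ^ 2 ≤ ∑ k, D k * (μ' k - μhat k) ^ 2 := by
    linarith
  have hjmem : j ∈ Finset.univ.erase i := by
    simp [Ne.symm hij]
  have split : ∀ g : Fin d → ℝ,
      ∑ k, g k = g i + (g j + ∑ k ∈ (Finset.univ.erase i).erase j, g k) := by
    intro g
    rw [← Finset.add_sum_erase Finset.univ g (Finset.mem_univ i), ← Finset.add_sum_erase _ g hjmem]
  rw [split (fun k => D k * (μstar k - μhat k) ^ 2),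
      split (fun k => D k * (μ' k - μhat k) ^ 2)] at key2
  have hrest : ∑ k ∈ (Finset.univ.erase i).erase j, D k * (μ' k - μhat k) ^ 2
      = ∑ k ∈ (Finset.univ.erase i).erase j, D k * (μstar k - μhat k) ^ 2 := by
    apply Finset.sum_congr rfl
    intro k hk
    simp only [Finset.mem_erase] at hk
    rw [hμ'k k hk.2.1 hk.1]
  rw [hrest] at key2
  simp only [hμ'i, hμ'j, hj] at key2
  have hsq : D i * (μstar i - μhat i) ^ 2 ≥ 0 :=
    mul_nonneg (le_of_lt (hD i)) (sq_nonneg _)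
  nlinarith [key2, hsq]
end

section
/- Let d ∈ ℕ, γ > 0, y ∈ {−1, +1}, x, μ_t : Fin d → ℝ, and σ_t : Fin d → ℝ with σ_{t,j} > 0 for all j (the diagonal of Σ_t). Define F(μ) = (1/2) Σ_j (μ_j − μ_{t,j})²/σ_{t,j} + (1/(2γ)) (max(0, 1 − y Σ_j μ_j x_j))². Set ℓ = max(0, 1 − y Σ_j μ_{t,j} x_j) and β = 1/(Σ_j x_j² σ_{t,j} + γ). Then the vector μ* with μ*_j = μ_{t,j} + β ℓ y σ_{t,j} x_j is the unique global minimizer of F over ℝ^d. (Correctness of the AROW mean update μ_{t+1} = μ_t − (1/2) β_t Σ_t g_t with g_t = −2 max(0, 1 − y_t x_tᵀμ_t) y_t x_t and β_t = 1/(x_tᵀΣ_t x_t + γ).) -/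
/-- Convexity of the squared hinge `s ↦ (max 0 s)²`:
`(max 0 b)² ≥ (max 0 a)² + 2 (max 0 a)(b − a)`. -/
lemma sq_hinge_convex (a b : ℝ) :
    (max 0 a) ^ 2 + 2 * (max 0 a) * (b - a) ≤ (max 0 b) ^ 2 := by
  rcases le_or_gt a 0 with ha | ha
  · rw [max_eq_left ha]
    simp [sq_nonneg (max 0 b)]
  · rw [max_eq_right ha.le]
    rcases le_or_gt b 0 with hb | hb
    · rw [max_eq_left hb]; nlinarith
    · rw [max_eq_right hb.le]; nlinarith [sq_nonneg (a - b)]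

/-- Correctness of the AROW mean update: with diagonal covariance
`σ_t`, squared hinge loss and `γ > 0`, the vector
`μ*_j = μ_{t,j} + β ℓ y σ_{t,j} x_j`, where
`ℓ = max 0 (1 − y ∑ μ_{t,j} x_j)` and `β = 1/(∑ x_j² σ_{t,j} + γ)`, is the
unique global minimizer of
`F μ = (1/2) ∑ (μ_j − μ_{t,j})²/σ_{t,j} + (1/(2γ)) (max 0 (1 − y ∑ μ_j x_j))²`. -/
theorem arow_mean_update_optimal
    (d : ℕ) (γ : ℝ) (hγ : γ > 0) (y : ℝ) (hy : y = 1 ∨ y = -1)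
    (x μt σt : Fin d → ℝ) (hσt : ∀ j, σt j > 0) :
    ∀ μ : Fin d → ℝ,
      μ ≠ (fun j => μt j +
          (1 / (∑ i, (x i) ^ 2 * σt i + γ)) *
            (max 0 (1 - y * ∑ i, μt i * x i)) * y * σt j * x j) →
      (1 / 2) * (∑ j, (((fun j => μt j +
            (1 / (∑ i, (x i) ^ 2 * σt i + γ)) *
              (max 0 (1 - y * ∑ i, μt i * x i)) * y * σt j * x j) j) - μt j) ^ 2
            / σt j) +
        (1 / (2 * γ)) * (max 0 (1 - y * ∑ j, ((fun j => μt j +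
            (1 / (∑ i, (x i) ^ 2 * σt i + γ)) *
              (max 0 (1 - y * ∑ i, μt i * x i)) * y * σt j * x j) j) * x j)) ^ 2 <
      (1 / 2) * (∑ j, (μ j - μt j) ^ 2 / σt j) +
        (1 / (2 * γ)) * (max 0 (1 - y * ∑ j, μ j * x j)) ^ 2 := by
  intro μ hμ
  have hy2 : y * y = 1 := by rcases hy with h | h <;> rw [h] <;> norm_num
  simp only [] at hμ ⊢
  set S := ∑ i, (x i) ^ 2 * σt i with hSdef
  have hS0 : 0 ≤ S := Finset.sum_nonneg fun i _ => mul_nonneg (sq_nonneg _) (hσt i).le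
  have hSγ : 0 < S + γ := by linarith
  set β := 1 / (S + γ) with hβdef
  have hβpos : 0 < β := by positivity
  have hβS : β * (S + γ) = 1 := by
    rw [hβdef]; field_simp
  set m := 1 - y * ∑ i, μt i * x i with hmdef
  set L := max 0 m with hLdef
  have hL0 : 0 ≤ L := le_max_left _ _
  set μs := fun j => μt j + β * L * y * σt j * x j with hμsdef
  -- the inner product at μ*
  have hsum : ∑ j, μs j * x j = (∑ i, μt i * x i) + β * L * y * S := by
    have : ∀ j ∈ Finset.univ, μs j * x j
        = μt j * x j + β * L * y * ((x j) ^ 2 * σt j) := by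
      intro j _; simp only [hμsdef]; ring
    rw [Finset.sum_congr rfl this, Finset.sum_add_distrib, ← Finset.mul_sum, hSdef]
  have ha' : 1 - y * ∑ j, μs j * x j = m - β * L * S := by
    rw [hsum, hmdef]
    have : y * (β * L * y * S) = β * L * S := by
      linear_combination (β * L * S) * hy2
    linarith [this]
  -- key: hinge value at μ* equals β γ L
  have hkey : max 0 (1 - y * ∑ j, μs j * x j) = β * γ * L := by
    rw [ha']
    rcases le_or_gt m 0 with hm | hm
    · have hL : L = 0 := max_eq_left hm
      rw [hL]; simp [hm, max_eq_left]
    · have hL : L = m := max_eq_right hm.le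
      have h1 : m - β * L * S = β * γ * L := by
        rw [hL]; nlinarith [hβS]
      rw [h1]
      exact max_eq_right (by positivity)
  -- deviation sums
  set T := ∑ j, (μ j - μs j) * x j with hTdef
  have hsum2 : ∑ j, μ j * x j = (∑ j, μs j * x j) + T := by
    rw [hTdef, ← Finset.sum_add_distrib]
    exact Finset.sum_congr rfl fun j _ => by ring
  -- strong convexity: exact quadratic expansion
  have hquad : ∑ j, (μ j - μt j) ^ 2 / σt j
      = (∑ j, (μs j - μt j) ^ 2 / σt j) + (∑ j, (μ j - μs j) ^ 2 / σt j)
        + 2 * (β * L * y) * T := by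
    rw [hTdef, Finset.mul_sum, ← Finset.sum_add_distrib, ← Finset.sum_add_distrib]
    refine Finset.sum_congr rfl fun j _ => ?_
    have hσ : σt j ≠ 0 := (hσt j).ne'
    simp only [hμsdef]
    field_simp
    ring
  -- positivity of the deviation energy
  obtain ⟨j0, hj0⟩ : ∃ j, μ j ≠ μs j := by
    by_contra h; push_neg at h; exact hμ (funext h)
  have hP : 0 < ∑ j, (μ j - μs j) ^ 2 / σt j := by
    refine Finset.sum_pos' (fun j _ => div_nonneg (sq_nonneg _) (hσt j).le)
      ⟨j0, Finset.mem_univ _, div_pos ?_ (hσt j0)⟩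
    have h2 : μ j0 - μs j0 ≠ 0 := sub_ne_zero.mpr hj0
    positivity
  -- hinge convexity bound
  have hB := sq_hinge_convex (1 - y * ∑ j, μs j * x j) (1 - y * ∑ j, μ j * x j)
  have hba : (1 - y * ∑ j, μ j * x j) - (1 - y * ∑ j, μs j * x j) = -(y * T) := by
    rw [hsum2]; ring
  rw [hba, hkey] at hB
  have hBc := mul_le_mul_of_nonneg_left hB (by positivity : (0:ℝ) ≤ 1 / (2 * γ))
  have hcancel : (1 / (2 * γ)) * ((β * γ * L) ^ 2 + 2 * (β * γ * L) * (-(y * T)))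
      = (1 / (2 * γ)) * (β * γ * L) ^ 2 - β * L * y * T := by
    field_simp
    ring
  rw [hcancel] at hBc
  have hfold : ∀ j, μt j + β * L * y * σt j * x j = μs j := fun j => rfl
  simp only [hfold]
  rw [hkey, hquad]
  linarith [hBc, hP]
end

section
/- Let γ > 0, d ∈ ℕ, B ≤ d, and let x_t : Fin d → ℝ for t ≥ 1. Define Σ : ℕ → Fin d → ℝ by Σ_{1,j} = 1 and Σ_{t+1,j} = (Σ_{t,j}⁻¹ + x_{t,j}²/γ)⁻¹ for all t and j. Then for every t, the B-th smallest value of the multiset {Σ_{t+1,1}, …, Σ_{t+1,d}} is less than or equal to the B-th smallest value of {Σ_{t,1}, …, Σ_{t,d}}. (The heap limit of the MaxHeap in Algorithm SOFS decreases monotonically, which justifies that elements never removed from consideration need not be re-checked.) -/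
/-- If `f ≤ g` pointwise, then the `k`-th smallest value of `f` is at most
the `k`-th smallest value of `g`. -/
lemma sorted_mono {n : ℕ} (f g : Fin n → ℝ) (h : ∀ i, f i ≤ g i) (k : Fin n) :
    (f ∘ Tuple.sort f) k ≤ (g ∘ Tuple.sort g) k := by
  set v := (g ∘ Tuple.sort g) k with hv
  set T : Finset (Fin n) := Finset.univ.filter (fun i => f i ≤ v) with hT
  have hA : (Finset.Iic k).image (Tuple.sort g) ⊆ T := by
    intro j hj
    simp only [Finset.mem_image, Finset.mem_Iic] at hj
    obtain ⟨i, hik, rfl⟩ := hj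
    simp only [hT, Finset.mem_filter, Finset.mem_univ, true_and]
    calc f (Tuple.sort g i) ≤ g (Tuple.sort g i) := h _
      _ ≤ v := Tuple.monotone_sort g hik
  have hcardA : ((Finset.Iic k).image (Tuple.sort g)).card = k.1 + 1 := by
    rw [Finset.card_image_of_injective _ (Tuple.sort g).injective]
    simp
  have hcardT : k.1 + 1 ≤ T.card := hcardA ▸ Finset.card_le_card hA
  set T' : Finset (Fin n) := T.image (Tuple.sort f).symm with hT'
  have hcardT' : k.1 + 1 ≤ T'.card := by
    rwa [hT', Finset.card_image_of_injective _ (Tuple.sort f).symm.injective]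
  have : ∃ i ∈ T', k ≤ i := by
    by_contra hcon
    push_neg at hcon
    have hsub : T' ⊆ Finset.Iio k := fun i hi => Finset.mem_Iio.mpr (hcon i hi)
    have := Finset.card_le_card hsub
    rw [Fin.card_Iio] at this
    omega
  obtain ⟨i, hiT', hki⟩ := this
  obtain ⟨j, hjT, hji⟩ := Finset.mem_image.mp hiT'
  have hfj : f j ≤ v := (Finset.mem_filter.mp hjT).2
  calc (f ∘ Tuple.sort f) k ≤ (f ∘ Tuple.sort f) i := Tuple.monotone_sort f hki
    _ = f j := by simp [← hji]
    _ ≤ v := hfj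

/-- The heap limit of the MaxHeap in Algorithm SOFS decreases monotonically:
with the AROW/SOFS diagonal covariance recursion `S 1 j = 1`,
`S (t+1) j = ((S t j)⁻¹ + (x t j)² / γ)⁻¹` (for `γ > 0`), the `B`-th smallest
value of `{S (t+1) 1, …, S (t+1) d}` is at most the `B`-th smallest value of
`{S t 1, …, S t d}` for every `t ≥ 1` (here `S t ∘ Tuple.sort (S t)` is the
tuple `S t` rearranged in nondecreasing order). -/
theorem sofs_heap_limit_monotone_decreasing
    (γ : ℝ) (hγ : γ > 0) (d B : ℕ) (hB1 : 1 ≤ B) (hBd : B ≤ d)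
    (x : ℕ → Fin d → ℝ) (S : ℕ → Fin d → ℝ)
    (hinit : ∀ j, S 1 j = 1)
    (hrec : ∀ t ≥ 1, ∀ j, S (t + 1) j = ((S t j)⁻¹ + (x t j) ^ 2 / γ)⁻¹) :
    ∀ t ≥ 1,
      (S (t + 1) ∘ Tuple.sort (S (t + 1))) ⟨B - 1, by omega⟩ ≤
        (S t ∘ Tuple.sort (S t)) ⟨B - 1, by omega⟩ := by
  have hpos : ∀ t ≥ 1, ∀ j, 0 < S t j := by
    intro t ht
    induction t with
    | zero => omega
    | succ n ih =>
      rcases Nat.eq_or_lt_of_le ht with h | h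
      · intro j; rw [show n + 1 = 1 by omega, hinit]; norm_num
      · intro j
        have hn : 1 ≤ n := by omega
        rw [hrec n hn j]
        have h1 : 0 < (S n j)⁻¹ := inv_pos.mpr (ih hn j)
        have h2 : 0 ≤ (x n j) ^ 2 / γ := div_nonneg (sq_nonneg _) hγ.le
        positivity
  intro t ht
  apply sorted_mono
  intro j
  rw [hrec t ht j]
  have hS := hpos t ht j
  have h1 : 0 < (S t j)⁻¹ := inv_pos.mpr hS
  have h2 : 0 ≤ (x t j) ^ 2 / γ := div_nonneg (sq_nonneg _) hγ.le
  calc ((S t j)⁻¹ + (x t j) ^ 2 / γ)⁻¹ ≤ ((S t j)⁻¹)⁻¹ := by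
        apply inv_anti₀ h1; linarith
    _ = S t j := inv_inv _
end
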